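/- Let m ≥ 1 be an integer and t, v, s real numbers with t > 0, v > 0 and s > m/2. Then ∫_0^∞ [ (2/τ)^{m/2} · t^{m/2 − 1} · exp(−2t/τ) / Γ(m/2) ] · [ (2v)^{s − m/2} / Γ(s − m/2) ] · τ^{m/2 − s − 1} · exp(−2v/τ) dτ = Γ(s) · t^{m/2 − 1} / ( Γ(s − m/2) · Γ(m/2) · v^{m/2} · (1 + t/v)^s ). -/

import Mathlib

open MeasureTheory

open Set Real

lemma inv_gamma_integral {a s : ℝ} (ha : 0 < a) (hs : 0 < s) :
    ∫ τ in Set.Ioi (0 : ℝ), τ ^ (-s - 1) * Real.exp (-(a / τ)) = Real.Gamma s / a ^ s := by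
  have key := integral_comp_rpow_Ioi (fun y => y ^ (s - 1) * Real.exp (-(a * y)))
      (p := -1) (by norm_num)
  rw [integral_rpow_mul_exp_neg_mul_Ioi hs ha] at key
  rw [show Real.Gamma s / a ^ s = (1 / a) ^ s * Real.Gamma s by
        rw [div_rpow (by norm_num) ha.le, one_rpow]; ring]
  rw [← key]
  refine setIntegral_congr_fun measurableSet_Ioi fun x hx => ?_
  have hx' : (0:ℝ) < x := hx
  simp only [smul_eq_mul, abs_neg, abs_one]
  rw [← Real.rpow_mul hx'.le, one_mul, ← mul_assoc, ← Real.rpow_add hx',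
    show (-1 - 1 : ℝ) + -1 * (s - 1) = -s - 1 by ring, Real.rpow_neg_one,
    ← div_eq_mul_inv]

/-- **The Gamma / inverse-Gamma mixing integral** (appendix of the paper): for
`t > 0`, `v > 0`, `s > m/2`,
`∫₀^∞ [(2/τ)^{m/2} t^{m/2−1} exp(−2t/τ)/Γ(m/2)] · [(2v)^{s−m/2}/Γ(s−m/2)] ·
τ^{m/2−s−1} exp(−2v/τ) dτ = Γ(s) t^{m/2−1} / (Γ(s−m/2) Γ(m/2) v^{m/2} (1+t/v)^s)`. -/
theorem pearsonVII_mixing_integral (m : ℕ) (hm : 1 ≤ m) (t v s : ℝ)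
    (ht : 0 < t) (hv : 0 < v) (hs : (m : ℝ) / 2 < s) :
    ∫ τ in Set.Ioi (0 : ℝ),
        ((2 / τ) ^ ((m : ℝ) / 2) * t ^ ((m : ℝ) / 2 - 1) * Real.exp (-(2 * t / τ)) /
            Real.Gamma ((m : ℝ) / 2)) *
          ((2 * v) ^ (s - (m : ℝ) / 2) / Real.Gamma (s - (m : ℝ) / 2)) *
          τ ^ ((m : ℝ) / 2 - s - 1) * Real.exp (-(2 * v / τ)) =
      Real.Gamma s * t ^ ((m : ℝ) / 2 - 1) /
        (Real.Gamma (s - (m : ℝ) / 2) * Real.Gamma ((m : ℝ) / 2) * v ^ ((m : ℝ) / 2) *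
          (1 + t / v) ^ s) := by
  set α : ℝ := (m : ℝ) / 2 with hα
  have hα0 : 0 < α := by positivity
  have hs0 : 0 < s := hα0.trans hs
  have hsα : 0 < s - α := by linarith
  have hΓα : 0 < Real.Gamma α := Real.Gamma_pos_of_pos hα0
  have hΓsα : 0 < Real.Gamma (s - α) := Real.Gamma_pos_of_pos hsα
  have ha : (0:ℝ) < 2 * (t + v) := by linarith
  set C : ℝ := 2 ^ α * t ^ (α - 1) * (2 * v) ^ (s - α) /
      (Real.Gamma α * Real.Gamma (s - α)) with hC
  have hcong : ∀ τ ∈ Set.Ioi (0:ℝ),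
      ((2 / τ) ^ α * t ^ (α - 1) * Real.exp (-(2 * t / τ)) / Real.Gamma α) *
        ((2 * v) ^ (s - α) / Real.Gamma (s - α)) * τ ^ (α - s - 1) *
        Real.exp (-(2 * v / τ)) =
      C * (τ ^ (-s - 1) * Real.exp (-(2 * (t + v) / τ))) := by
    intro τ hτ
    have hτ' : (0:ℝ) < τ := hτ
    have e1 : (2 / τ) ^ α = 2 ^ α / τ ^ α := div_rpow (by norm_num) hτ'.le α
    have e2 : τ ^ (α - s - 1) = τ ^ α * τ ^ (-s - 1) := by
      rw [← Real.rpow_add hτ']; ring_nf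
    have e3 : Real.exp (-(2 * (t + v) / τ)) =
        Real.exp (-(2 * t / τ)) * Real.exp (-(2 * v / τ)) := by
      rw [← Real.exp_add]; congr 1; field_simp; ring
    rw [e1, e2, e3, hC]
    have hτα : τ ^ α ≠ 0 := (Real.rpow_pos_of_pos hτ' α).ne'
    field_simp
  rw [setIntegral_congr_fun measurableSet_Ioi hcong, integral_const_mul,
    inv_gamma_integral ha hs0]
  have h1 : (2 * v) ^ (s - α) = 2 ^ (s - α) * v ^ (s - α) :=
    mul_rpow (by norm_num) hv.le
  have h2 : (2 * (t + v)) ^ s = 2 ^ s * (t + v) ^ s :=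
    mul_rpow (by norm_num) (by linarith)
  have h3 : (1 + t / v) ^ s = (t + v) ^ s / v ^ s := by
    rw [show (1 + t / v) = (t + v) / v by field_simp; ring, div_rpow (by linarith) hv.le]
  have h4 : (2:ℝ) ^ α * 2 ^ (s - α) = 2 ^ s := by
    rw [← Real.rpow_add (by norm_num)]; ring_nf
  have h5 : v ^ (s - α) * v ^ α = v ^ s := by
    rw [← Real.rpow_add hv]; ring_nf
  have p2s : (0:ℝ) < 2 ^ s := rpow_pos_of_pos (by norm_num) s
  have ptv : (0:ℝ) < (t + v) ^ s := rpow_pos_of_pos (by linarith) s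
  have pvs : (0:ℝ) < v ^ s := rpow_pos_of_pos hv s
  have pvα : (0:ℝ) < v ^ α := rpow_pos_of_pos hv α
  rw [hC, h1, h2, h3]
  field_simp
  rw [← h4, ← h5]
  ring
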